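/- For any constants γ ∈ (0, 1) and ν ∈ (0, 1), there exists a constant c_{γ,ν} > 0 (depending only on γ and ν) such that for all integers t ≥ 1, the sum ∑_{k=0}^{t−1} γ^{t−k} / (k + 1)^ν is at most c_{γ,ν} / (t + 1)^ν. -/

import Mathlib

/-- For any `γ ∈ (0,1)` and `ν ∈ (0,1)` there exists `c > 0` such that for all `t ≥ 1`,
`∑_{k=0}^{t−1} γ^{t−k}/(k+1)^ν ≤ c/(t+1)^ν`. -/
theorem geometric_polynomial_series_bound
    (γ ν : ℝ) (hγ0 : 0 < γ) (hγ1 : γ < 1) (hν0 : 0 < ν) (hν1 : ν < 1) :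
    ∃ c : ℝ, 0 < c ∧ ∀ t : ℕ, 1 ≤ t →
      ∑ k ∈ Finset.range t, γ ^ (t - k) / ((k : ℝ) + 1) ^ ν ≤
        c / ((t : ℝ) + 1) ^ ν := by
  have h1γ : (0:ℝ) < 1 - γ := by linarith
  refine ⟨2 * γ / (1 - γ) ^ 2, by positivity, ?_⟩
  intro t ht
  have htpos : (0:ℝ) < (t : ℝ) + 1 := by positivity
  rw [le_div_iff₀ (by positivity)]
  rw [Finset.sum_mul]
  have step1 : ∀ k ∈ Finset.range t,
      γ ^ (t - k) / ((k : ℝ) + 1) ^ ν * ((t : ℝ) + 1) ^ ν ≤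
        γ ^ (t - k) * (((t - k : ℕ) : ℝ) + 1) := by
    intro k hk
    rw [Finset.mem_range] at hk
    have hk1 : (0:ℝ) < (k : ℝ) + 1 := by positivity
    have htk1 : (1:ℝ) ≤ ((t - k : ℕ) : ℝ) + 1 := by
      have := Nat.cast_nonneg (α := ℝ) (t - k); linarith
    have key : ((t : ℝ) + 1) ^ ν ≤ ((k : ℝ) + 1) ^ ν * (((t - k : ℕ) : ℝ) + 1) := by
      have h1 : ((t : ℝ) + 1) ≤ ((k : ℝ) + 1) * (((t - k : ℕ) : ℝ) + 1) := by
        have : (t : ℝ) + 1 ≤ ((k + 1) * ((t - k) + 1) : ℕ) := by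
          have : t + 1 ≤ (k + 1) * ((t - k) + 1) := by nlinarith [Nat.sub_add_cancel hk.le]
          exact_mod_cast this
        push_cast at this ⊢
        linarith
      calc ((t : ℝ) + 1) ^ ν ≤ (((k : ℝ) + 1) * (((t - k : ℕ) : ℝ) + 1)) ^ ν :=
            Real.rpow_le_rpow (by positivity) h1 hν0.le
        _ = ((k : ℝ) + 1) ^ ν * (((t - k : ℕ) : ℝ) + 1) ^ ν :=
            Real.mul_rpow (by positivity) (by positivity)
        _ ≤ ((k : ℝ) + 1) ^ ν * (((t - k : ℕ) : ℝ) + 1) := by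
            have := Real.rpow_le_rpow_of_exponent_le htk1 hν1.le
            rw [Real.rpow_one] at this
            exact mul_le_mul_of_nonneg_left this (by positivity)
    rw [div_mul_eq_mul_div, div_le_iff₀ (by positivity), mul_assoc, mul_comm (((t-k:ℕ):ℝ)+1)]
    exact mul_le_mul_of_nonneg_left key (by positivity)
  refine le_trans (Finset.sum_le_sum step1) ?_
  have reflect : ∑ k ∈ Finset.range t, γ ^ (t - k) * (((t - k : ℕ) : ℝ) + 1)
      = ∑ j ∈ Finset.range t, γ ^ (j + 1) * (((j : ℝ) + 1) + 1) := by
    rw [← Finset.sum_range_reflect]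
    apply Finset.sum_congr rfl
    intro j hj
    rw [Finset.mem_range] at hj
    have h1 : t - (t - 1 - j) = j + 1 := by omega
    rw [h1]
    push_cast
    ring
  rw [reflect]
  have step2 : ∀ j ∈ Finset.range t,
      γ ^ (j + 1) * (((j : ℝ) + 1) + 1) ≤ 2 * (((j : ℝ) + 1) * γ ^ (j + 1)) := by
    intro j hj
    have : (((j : ℝ) + 1) + 1) ≤ 2 * ((j : ℝ) + 1) := by
      have : (0:ℝ) ≤ j := Nat.cast_nonneg j
      linarith
    nlinarith [pow_pos hγ0 (j + 1)]
  refine le_trans (Finset.sum_le_sum step2) ?_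
  rw [← Finset.mul_sum]
  have hsum : ∑ j ∈ Finset.range t, ((j : ℝ) + 1) * γ ^ (j + 1)
      = ∑ n ∈ Finset.range (t + 1), (n : ℝ) * γ ^ n := by
    rw [Finset.sum_range_succ' (fun n => (n : ℝ) * γ ^ n) t]
    push_cast
    simp
  rw [hsum]
  have hnorm : ‖γ‖ < 1 := by rw [Real.norm_eq_abs, abs_of_pos hγ0]; exact hγ1
  have hsummable : Summable (fun n : ℕ => (n : ℝ) * γ ^ n) := by
    simpa using summable_pow_mul_geometric_of_norm_lt_one 1 hnorm
  have htsum : ∑' n : ℕ, (n : ℝ) * γ ^ n = γ / (1 - γ) ^ 2 :=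
    tsum_coe_mul_geometric_of_norm_lt_one hnorm
  have hle : ∑ n ∈ Finset.range (t + 1), (n : ℝ) * γ ^ n ≤ γ / (1 - γ) ^ 2 := by
    rw [← htsum]
    exact Summable.sum_le_tsum _ (fun n _ => by positivity) hsummable
  calc 2 * ∑ n ∈ Finset.range (t + 1), (n : ℝ) * γ ^ n
      ≤ 2 * (γ / (1 - γ) ^ 2) := by linarith
    _ = 2 * γ / (1 - γ) ^ 2 := by ring
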